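/- In the forest monoid 𝓕: (1) any two elements a, b have a common right multiple, i.e. a·𝓕 ∩ b·𝓕 is nonempty; (2) any two elements a, b have a least common right multiple, i.e. an element c ∈ a·𝓕 ∩ b·𝓕 such that every c' ∈ a·𝓕 ∩ b·𝓕 lies in c·𝓕; (3) any two elements a, b have a greatest common left factor, i.e. an element d with a ∈ d·𝓕 and b ∈ d·𝓕 such that every d' with a ∈ d'·𝓕 and b ∈ d'·𝓕 satisfies d ∈ d'·𝓕; (4) any two elements a, b have a greatest common right factor, i.e. an element f with a ∈ 𝓕·f and b ∈ 𝓕·f such that every f' with a ∈ 𝓕·f' and b ∈ 𝓕·f' satisfies f ∈ 𝓕·f'; (5) any two elements a, b with 𝓕·a ∩ 𝓕·b nonempty have a least common left multiple, i.e. an element c ∈ 𝓕·a ∩ 𝓕·b such that every c' ∈ 𝓕·a ∩ 𝓕·b lies in 𝓕·c. -/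

import Mathlib

/-- The defining relation of the forest monoid: `λ_j * λ_i = λ_i * λ_{j+1}` for `i < j`. -/
def ForestRel : FreeMonoid ℕ+ → FreeMonoid ℕ+ → Prop := fun a b =>
  ∃ i j : ℕ+, i < j ∧ a = FreeMonoid.of j * FreeMonoid.of i ∧
    b = FreeMonoid.of i * FreeMonoid.of (j + 1)

/-- The congruence generated by the forest relations. -/
def ForestCon : Con (FreeMonoid ℕ+) := conGen ForestRel

/-- The forest monoid `𝓕`. -/
abbrev ForestMonoid := ForestCon.Quotient

/-- The generator `λ_k` of the forest monoid. -/
def lam (k : ℕ+) : ForestMonoid := ForestCon.mk' (FreeMonoid.of k)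


namespace ForestAux

/-- left multiplication of a normal form by a generator -/
def lm (k : ℕ+) : List ℕ+ → List ℕ+
  | [] => [k]
  | m :: t => if k ≤ m then k :: m :: t else m :: lm (k+1) t

lemma lm_nil (k : ℕ+) : lm k [] = [k] := rfl

lemma lm_cons_le {k m : ℕ+} (h : k ≤ m) (t : List ℕ+) :
    lm k (m :: t) = k :: m :: t := by simp [lm, h]

lemma lm_cons_gt {k m : ℕ+} (h : m < k) (t : List ℕ+) :
    lm k (m :: t) = m :: lm (k+1) t := by simp [lm, not_le.2 h]

lemma pnat_lt_succ (j : ℕ+) : j < j + 1 := PNat.lt_add_right j 1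

lemma lm_rel {i j : ℕ+} (h : i < j) : ∀ L : List ℕ+,
    lm j (lm i L) = lm i (lm (j+1) L) := by
  intro L
  induction L generalizing i j with
  | nil =>
      rw [lm_nil, lm_nil, lm_cons_gt h, lm_nil,
        lm_cons_le (le_of_lt (h.trans (pnat_lt_succ j)))]
  | cons m t ih =>
      rcases le_or_gt i m with him | him
      · rw [lm_cons_le him, lm_cons_gt h]
        rcases le_or_gt (j+1) m with hjm | hjm
        · rw [lm_cons_le hjm, lm_cons_le (le_of_lt (h.trans (pnat_lt_succ j)))]
        · rw [lm_cons_gt hjm, lm_cons_le him]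
      · have hjm : m < j + 1 := him.trans (h.trans (pnat_lt_succ j))
        rw [lm_cons_gt him, lm_cons_gt (him.trans h), lm_cons_gt hjm, lm_cons_gt him,
          ih (by exact add_lt_add_left h 1)]
/-- the hom to endomorphisms of lists -/
def phi : FreeMonoid ℕ+ →* Function.End (List ℕ+) :=
  FreeMonoid.lift (fun k => (lm k : List ℕ+ → List ℕ+))

lemma phi_le : ForestCon ≤ Con.ker phi := by
  refine Con.conGen_le.2 fun a b hab => ?_
  obtain ⟨i, j, hij, rfl, rfl⟩ := hab
  show phi _ = phi _
  rw [map_mul, map_mul]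
  funext L
  show (phi (FreeMonoid.of j)) ((phi (FreeMonoid.of i)) L) =
    (phi (FreeMonoid.of i)) ((phi (FreeMonoid.of (j+1))) L)
  simp only [phi, FreeMonoid.lift_eval_of]
  exact lm_rel hij L

def Phi : ForestMonoid →* Function.End (List ℕ+) := ForestCon.lift phi phi_le

def nf (x : ForestMonoid) : List ℕ+ := Phi x []

def emb (l : List ℕ+) : ForestMonoid := (l.map lam).prod

@[simp] lemma emb_nil : emb [] = 1 := rfl

@[simp] lemma emb_cons (k : ℕ+) (t : List ℕ+) : emb (k :: t) = lam k * emb t := by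
  simp [emb]

lemma emb_append (a b : List ℕ+) : emb (a ++ b) = emb a * emb b := by
  simp [emb]

lemma Phi_lam (k : ℕ+) : Phi (lam k) = (lm k : List ℕ+ → List ℕ+) := by
  show Phi (ForestCon.mk' (FreeMonoid.of k)) = _
  rw [Phi, Con.lift_mk']
  simp [phi]
  exact FreeMonoid.lift_eval_of _ _

lemma nf_lam_mul (k : ℕ+) (x : ForestMonoid) : nf (lam k * x) = lm k (nf x) := by
  show Phi (lam k * x) [] = _
  rw [map_mul]
  show Phi (lam k) (Phi x []) = _
  rw [Phi_lam]; rfl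

lemma lam_rel {i j : ℕ+} (h : i < j) : lam j * lam i = lam i * lam (j+1) := by
  show ForestCon.mk' _ * ForestCon.mk' _ = ForestCon.mk' _ * ForestCon.mk' _
  rw [← map_mul, ← map_mul, Con.coe_mk']
  exact (Con.eq ForestCon).2 (ConGen.Rel.of _ _ ⟨i, j, h, rfl, rfl⟩)

lemma exists_emb (x : ForestMonoid) : ∃ l : List ℕ+, emb l = x := by
  obtain ⟨w, rfl⟩ := ForestCon.mk'_surjective x
  induction w using FreeMonoid.recOn with
  | one => exact ⟨[], by simp⟩
  | of_mul k w ih =>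
      obtain ⟨l, hl⟩ := ih
      exact ⟨k :: l, by rw [emb_cons, hl, map_mul]; rfl⟩

lemma emb_lm (k : ℕ+) : ∀ l : List ℕ+, emb (lm k l) = lam k * emb l := by
  intro l
  induction l generalizing k with
  | nil => simp [lm_nil]
  | cons m t ih =>
      rcases le_or_gt k m with h | h
      · rw [lm_cons_le h]; simp
      · rw [lm_cons_gt h, emb_cons, ih, emb_cons, ← mul_assoc, ← lam_rel h, mul_assoc]
lemma emb_Phi (l : List ℕ+) : ∀ L : List ℕ+, emb (Phi (emb l) L) = emb l * emb L := by
  induction l with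
  | nil => intro L; simp [map_one]; rfl
  | cons k t ih =>
      intro L
      rw [emb_cons, map_mul]
      show emb (Phi (lam k) (Phi (emb t) L)) = _
      rw [Phi_lam, emb_lm, ih, mul_assoc]

lemma emb_nf (x : ForestMonoid) : emb (nf x) = x := by
  obtain ⟨l, rfl⟩ := exists_emb x
  show emb (Phi (emb l) []) = _
  rw [emb_Phi, emb_nil, mul_one]

lemma nf_inj {x y : ForestMonoid} (h : nf x = nf y) : x = y := by
  rw [← emb_nf x, ← emb_nf y, h]

/-- Sortedness (non-decreasing) -/
abbrev Srt (l : List ℕ+) : Prop := List.Pairwise (· ≤ ·) l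

lemma lm_min {c : ℕ+} : ∀ (l : List ℕ+) (k : ℕ+), c ≤ k → (∀ e ∈ l, c ≤ e) →
    ∀ e ∈ lm k l, c ≤ e := by
  intro l
  induction l with
  | nil => intro k hk _ e he; rw [lm_nil] at he; simp at he; subst he; exact hk
  | cons m t ih =>
      intro k hk hl e he
      rcases le_or_gt k m with h | h
      · rw [lm_cons_le h] at he
        rcases List.mem_cons.1 he with rfl | he
        · exact hk
        · exact hl e he
      · rw [lm_cons_gt h] at he
        rcases List.mem_cons.1 he with rfl | he
        · exact hl e (List.mem_cons_self)
        · exact ih (k+1) (hk.trans (le_of_lt (pnat_lt_succ k)))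
            (fun e' he' => hl e' (List.mem_cons_of_mem _ he')) e he

lemma lm_sorted {k : ℕ+} {l : List ℕ+} (hl : Srt l) : Srt (lm k l) := by
  induction l generalizing k with
  | nil => simp [lm_nil]
  | cons m t ih =>
      replace hl := List.pairwise_cons.1 hl
      rcases le_or_gt k m with h | h
      · rw [lm_cons_le h]
        refine List.pairwise_cons.2 ⟨?_, List.pairwise_cons.2 hl⟩
        intro b hb
        rcases List.mem_cons.1 hb with rfl | hb
        · exact h
        · exact h.trans (hl.1 b hb)
      · rw [lm_cons_gt h]
        refine List.pairwise_cons.2 ⟨?_, ih hl.2⟩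
        exact lm_min t (k+1) ((le_of_lt h).trans (le_of_lt (pnat_lt_succ k))) hl.1

lemma nf_sorted (x : ForestMonoid) : Srt (nf x) := by
  obtain ⟨l, rfl⟩ := exists_emb x
  show Srt (Phi (emb l) [])
  induction l with
  | nil => simp [map_one]; constructor
  | cons k t ih =>
      rw [emb_cons, map_mul]
      show Srt (Phi (lam k) (Phi (emb t) []))
      rw [Phi_lam]
      exact lm_sorted ih

lemma nf_emb_sorted : ∀ {l : List ℕ+}, Srt l → nf (emb l) = l := by
  intro l
  induction l with
  | nil => intro _; show Phi 1 [] = []; rw [map_one]; rfl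
  | cons k t ih =>
      intro hl
      replace hl := List.pairwise_cons.1 hl
      rw [emb_cons, nf_lam_mul, ih hl.2]
      cases t with
      | nil => exact lm_nil k
      | cons m t' => exact lm_cons_le (hl.1 m (List.mem_cons_self)) t'

lemma lm_length : ∀ (l : List ℕ+) (k : ℕ+), (lm k l).length = l.length + 1 := by
  intro l
  induction l with
  | nil => intro k; rfl
  | cons m t ih =>
      intro k
      rcases le_or_gt k m with h | h
      · rw [lm_cons_le h]; rfl
      · rw [lm_cons_gt h]; simp [ih]

lemma lm_inj : ∀ (u u' : List ℕ+) (k : ℕ+), lm k u = lm k u' → u = u' := by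
  intro u
  induction u with
  | nil =>
      intro u' k h
      cases u' with
      | nil => rfl
      | cons m t =>
          exfalso
          have := lm_length (m :: t) k
          rw [← h, lm_nil] at this
          simp at this
  | cons m t ih =>
      intro u' k h
      cases u' with
      | nil =>
          exfalso
          have := lm_length (m :: t) k
          rw [h, lm_nil] at this
          simp at this
      | cons m' t' =>
          rcases le_or_gt k m with h1 | h1 <;> rcases le_or_gt k m' with h2 | h2
          · rw [lm_cons_le h1, lm_cons_le h2] at h
            simpa using h
          · rw [lm_cons_le h1, lm_cons_gt h2] at h
            exact absurd (List.cons_eq_cons.1 h).1.symm (ne_of_lt h2)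
          · rw [lm_cons_gt h1, lm_cons_le h2] at h
            exact absurd (List.cons_eq_cons.1 h).1 (ne_of_lt h1)
          · rw [lm_cons_gt h1, lm_cons_gt h2] at h
            obtain ⟨rfl, htl⟩ := List.cons_eq_cons.1 h
            rw [ih t' (k+1) htl]

lemma left_cancel_lam {k : ℕ+} {x y : ForestMonoid} (h : lam k * x = lam k * y) : x = y := by
  apply nf_inj
  have := congrArg nf h
  rw [nf_lam_mul, nf_lam_mul] at this
  exact lm_inj _ _ _ this
lemma lm_insert : ∀ (P : List ℕ+) (k C : ℕ+) (Q : List ℕ+),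
    (∀ i (h : i < P.length), ((P[i]'h : ℕ+) : ℕ) < (k : ℕ) + i) →
    ((C : ℕ) = (k : ℕ) + P.length) →
    (∀ e, Q.head? = some e → C ≤ e) →
    lm k (P ++ Q) = P ++ C :: Q := by
  intro P
  induction P with
  | nil =>
      intro k C Q _ hC hQ
      have hCk : C = k := by
        apply PNat.coe_injective
        simpa using hC
      subst hCk
      cases Q with
      | nil => exact lm_nil C
      | cons m t => exact lm_cons_le (hQ m rfl) t
  | cons m P' ih =>
      intro k C Q hb hC hQ
      have hmk : m < k := by
        have := hb 0 (by simp)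
        rw [← PNat.coe_lt_coe]
        simpa using this
      have h1 : ∀ i (h : i < P'.length), ((P'[i]'h : ℕ+) : ℕ) < ((k+1 : ℕ+) : ℕ) + i := by
        intro i h
        have := hb (i+1) (by simpa using Nat.succ_lt_succ h)
        simp only [List.getElem_cons_succ] at this
        rw [PNat.add_coe, PNat.one_coe]
        omega
      have h2 : (C : ℕ) = ((k+1 : ℕ+) : ℕ) + P'.length := by
        rw [hC, PNat.add_coe, PNat.one_coe]
        simp
        omega
      rw [List.cons_append, lm_cons_gt hmk, ih (k+1) C Q h1 h2 hQ, List.cons_append]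

lemma lm_extract : ∀ (u : List ℕ+) (k : ℕ+), ∃ P C Q,
    u = P ++ Q ∧ lm k u = P ++ C :: Q ∧
    (∀ i (h : i < P.length), ((P[i]'h : ℕ+) : ℕ) < (k : ℕ) + i) ∧
    ((C : ℕ) = (k : ℕ) + P.length) ∧
    (∀ e, Q.head? = some e → C ≤ e) := by
  intro u
  induction u with
  | nil =>
      intro k
      exact ⟨[], k, [], rfl, lm_nil k, by intro i h; simp at h, by simp, by intro e h; simp at h⟩
  | cons m t ih =>
      intro k
      rcases le_or_gt k m with h | h
      · refine ⟨[], k, m :: t, rfl, lm_cons_le h t, by intro i hi; simp at hi, by simp, ?_⟩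
        intro e he
        simp at he
        subst he; exact h
      · obtain ⟨P', C, Q, h1, h2, h3, h4, h5⟩ := ih (k+1)
        refine ⟨m :: P', C, Q, by rw [List.cons_append, ← h1], ?_, ?_, ?_, h5⟩
        · rw [lm_cons_gt h, h2, List.cons_append]
        · intro i hi
          cases i with
          | zero => simpa using (PNat.coe_lt_coe m k).2 h
          | succ j =>
              have hj : j < P'.length := by simpa using Nat.lt_of_succ_lt_succ hi
              have := h3 j hj
              rw [PNat.add_coe, PNat.one_coe] at this
              simp only [List.getElem_cons_succ]
              omega
        · rw [h4, PNat.add_coe, PNat.one_coe]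
          simp; omega

lemma surg : ∀ (A : List ℕ+) {B : List ℕ+} {a : ℕ+} (C : List ℕ+) {D : List ℕ+} {c : ℕ+},
    A ++ a :: B = C ++ c :: D → A.length < C.length →
    ∃ r, C = A ++ a :: r ∧ B = r ++ c :: D := by
  intro A
  induction A with
  | nil =>
      intro B a C D c h hl
      cases C with
      | nil => simp at hl
      | cons c₀ C' =>
          rw [List.nil_append, List.cons_append] at h
          obtain ⟨rfl, h2⟩ := List.cons_eq_cons.1 h
          exact ⟨C', rfl, h2⟩
  | cons a₀ A' ih =>
      intro B a C D c h hl
      cases C with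
      | nil => simp at hl
      | cons c₀ C' =>
          rw [List.cons_append, List.cons_append] at h
          obtain ⟨rfl, h2⟩ := List.cons_eq_cons.1 h
          obtain ⟨r, hr1, hr2⟩ := ih C' h2 (by simpa using Nat.lt_of_succ_lt_succ hl)
          exact ⟨r, by rw [hr1, List.cons_append], hr2⟩

lemma sorted_after {A L : List ℕ+} {b : ℕ+} (h : Srt (A ++ b :: L)) : ∀ e ∈ L, b ≤ e := by
  have h2 : Srt (b :: L) := List.Pairwise.sublist (List.sublist_append_right A (b :: L)) h
  exact fun e he => List.rel_of_pairwise_cons h2 he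

lemma keyL {s t : ℕ+} {x y : ForestMonoid} (hst : s < t) (h : lam s * x = lam t * y) :
    ∃ z, x = lam (t+1) * z ∧ y = lam s * z := by
  have hv : lm s (nf x) = lm t (nf y) := by
    have := congrArg nf h
    rwa [nf_lam_mul, nf_lam_mul] at this
  obtain ⟨P₁, C₁, Q₁, hx1, hx2, hb1, hc1, hh1⟩ := lm_extract (nf x) s
  obtain ⟨P₂, C₂, Q₂, hy1, hy2, hb2, hc2, hh2⟩ := lm_extract (nf y) t
  have hveq : P₁ ++ C₁ :: Q₁ = P₂ ++ C₂ :: Q₂ := hx2.symm.trans (hv.trans hy2)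
  have hvlen : P₁.length + 1 + Q₁.length = P₂.length + 1 + Q₂.length := by
    have := congrArg List.length hveq
    simpa [Nat.add_comm, Nat.add_assoc, Nat.add_left_comm] using this
  have hst' : (s : ℕ) < (t : ℕ) := (PNat.coe_lt_coe s t).2 hst
  -- length comparison
  have hv2 : ∀ n : ℕ, (P₁ ++ C₁ :: Q₁)[n]? = (P₂ ++ C₂ :: Q₂)[n]? := fun n => by rw [hveq]
  have hC2at : (P₂ ++ C₂ :: Q₂)[P₂.length]? = some C₂ := by
    rw [List.getElem?_append_right (Nat.le_refl _), Nat.sub_self]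
    exact List.getElem?_cons_zero
  have hlen : P₁.length < P₂.length := by
    by_contra hle
    push_neg at hle
    rcases Nat.lt_or_ge P₂.length P₁.length with hlt | hge
    · have hthis := (hv2 P₂.length).trans hC2at
      rw [List.getElem?_append_left hlt] at hthis
      obtain ⟨hw, hval⟩ := List.getElem?_eq_some_iff.1 hthis
      have hb := hb1 P₂.length hw
      rw [hval, hc2] at hb
      omega
    · have hPeq : P₁.length = P₂.length := Nat.le_antisymm hge hle
      have h1 : (P₁ ++ C₁ :: Q₁)[P₂.length]? = some C₁ := by
        rw [List.getElem?_append_right (by omega : P₁.length ≤ P₂.length)]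
        have hz : P₂.length - P₁.length = 0 := by omega
        rw [hz]
        exact List.getElem?_cons_zero
      have hCC : C₁ = C₂ := Option.some.inj (h1.symm.trans ((hv2 P₂.length).trans hC2at))
      have hcc : (C₁ : ℕ) = (C₂ : ℕ) := congrArg _ hCC
      omega
  obtain ⟨r, hP2, hQ1⟩ := surg P₁ P₂ hveq hlen
  have hrlen : P₂.length = P₁.length + 1 + r.length := by
    rw [hP2]; simp; omega
  -- x side
  have hxside : lm (t+1) ((P₁ ++ r) ++ Q₂) = (P₁ ++ r) ++ C₂ :: Q₂ := by
    apply lm_insert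
    · intro i hi
      rcases Nat.lt_or_ge i P₁.length with hiP | hiP
      · rw [List.getElem_append_left hiP]
        have := hb1 i hiP
        rw [PNat.add_coe, PNat.one_coe]
        omega
      · rw [List.getElem_append_right hiP]
        have hir : i - P₁.length < r.length := by
          simp at hi; omega
        have hi2 : i + 1 < P₂.length := by omega
        have he : P₂[i+1]? = r[i - P₁.length]? := by
          rw [hP2, List.getElem?_append_right (by omega : P₁.length ≤ i + 1)]
          have hz : i + 1 - P₁.length = (i - P₁.length) + 1 := by omega
          rw [hz, List.getElem?_cons_succ]
        rw [List.getElem?_eq_getElem hi2, List.getElem?_eq_getElem hir] at he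
        have hval := Option.some.inj he
        have := hb2 (i+1) hi2
        rw [hval] at this
        rw [PNat.add_coe, PNat.one_coe]
        omega
    · rw [hc2, hrlen, PNat.add_coe, PNat.one_coe]
      simp; omega
    · exact hh2
  -- y side
  have hsrt : Srt (P₁ ++ C₁ :: Q₁) := by
    rw [← hx2, ← nf_lam_mul]
    exact nf_sorted _
  have hyC : ∀ e, (r ++ Q₂).head? = some e → C₁ ≤ e := by
    intro e he
    have hmem : e ∈ r ++ Q₂ := List.mem_of_mem_head? he
    have hmem2 : e ∈ Q₁ := by
      rw [hQ1]
      rcases List.mem_append.1 hmem with h' | h'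
      · exact List.mem_append.2 (Or.inl h')
      · exact List.mem_append.2 (Or.inr (List.mem_cons_of_mem _ h'))
    exact sorted_after hsrt e hmem2
  have hyside : lm s (P₁ ++ (r ++ Q₂)) = P₁ ++ C₁ :: (r ++ Q₂) := by
    apply lm_insert _ _ _ _ hb1 hc1 hyC
  refine ⟨emb (P₁ ++ (r ++ Q₂)), ?_, ?_⟩
  · rw [← emb_nf x, hx1, hQ1]
    have hassoc : P₁ ++ (r ++ C₂ :: Q₂) = (P₁ ++ r) ++ C₂ :: Q₂ := by
      rw [List.append_assoc]
    rw [hassoc, ← hxside, emb_lm, List.append_assoc]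
  · rw [← emb_nf y, hy1, hP2]
    have hassoc : (P₁ ++ C₁ :: r) ++ Q₂ = P₁ ++ C₁ :: (r ++ Q₂) := by
      simp [List.append_assoc]
    rw [hassoc, ← hyside, emb_lm]
/-- formal right multiplication on sorted lists -/
def rmul (s : ℕ+) : List ℕ+ → List ℕ+
  | [] => [s]
  | m :: t => if m ≤ s then m :: rmul s t else s :: (m+1) :: t.map (· + 1)

lemma rmul_nil (s : ℕ+) : rmul s [] = [s] := rfl

lemma rmul_cons_le {s m : ℕ+} (h : m ≤ s) (t : List ℕ+) :
    rmul s (m :: t) = m :: rmul s t := by simp [rmul, h]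

lemma rmul_cons_gt {s m : ℕ+} (h : s < m) (t : List ℕ+) :
    rmul s (m :: t) = s :: (m+1) :: t.map (· + 1) := by simp [rmul, not_le.2 h]

lemma rmul_gt {s : ℕ+} : ∀ {t : List ℕ+}, (∀ e ∈ t, s < e) → rmul s t = s :: t.map (· + 1) := by
  intro t
  induction t with
  | nil => intro _; rfl
  | cons m t ih =>
      intro h
      rw [rmul_cons_gt (h m (List.mem_cons_self))]
      simp

lemma pnat_succ_le_succ {a b : ℕ+} (h : a ≤ b) : a + 1 ≤ b + 1 := add_le_add_left h 1

lemma pnat_succ_inj : Function.Injective (fun e : ℕ+ => e + 1) := by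
  intro a b h
  apply PNat.coe_injective
  have := congrArg (fun e : ℕ+ => (e : ℕ)) h
  simp only [PNat.add_coe, PNat.one_coe] at this
  omega

lemma map_succ_sorted {t : List ℕ+} (h : Srt t) : Srt (t.map (· + 1)) := by
  rw [Srt, List.pairwise_map]
  exact h.imp pnat_succ_le_succ

lemma rmul_min {s c : ℕ+} (hcs : c ≤ s) : ∀ {t : List ℕ+}, (∀ e ∈ t, c ≤ e) →
    ∀ e ∈ rmul s t, c ≤ e := by
  intro t
  induction t with
  | nil =>
      intro _ e he
      rw [rmul_nil] at he
      simp at he; subst he; exact hcs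
  | cons m t ih =>
      intro h e he
      rcases le_or_gt m s with h1 | h1
      · rw [rmul_cons_le h1] at he
        rcases List.mem_cons.1 he with rfl | he
        · exact h e (List.mem_cons_self)
        · exact ih (fun e' he' => h e' (List.mem_cons_of_mem _ he')) e he
      · rw [rmul_cons_gt h1] at he
        rcases List.mem_cons.1 he with rfl | he
        · exact hcs
        · rcases List.mem_cons.1 he with rfl | he
          · exact (h m (List.mem_cons_self)).trans (le_of_lt (pnat_lt_succ m))
          · obtain ⟨f, hf, rfl⟩ := List.mem_map.1 he
            exact (h f (List.mem_cons_of_mem _ hf)).trans (le_of_lt (pnat_lt_succ f))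

lemma rmul_sorted {s : ℕ+} : ∀ {u : List ℕ+}, Srt u → Srt (rmul s u) := by
  intro u
  induction u with
  | nil => intro _; rw [rmul_nil]; simp
  | cons m t ih =>
      intro h
      replace h := List.pairwise_cons.1 h
      rcases le_or_gt m s with h1 | h1
      · rw [rmul_cons_le h1]
        exact List.pairwise_cons.2 ⟨rmul_min h1 h.1, ih h.2⟩
      · rw [rmul_cons_gt h1]
        refine List.pairwise_cons.2 ⟨?_, List.pairwise_cons.2 ⟨?_, map_succ_sorted h.2⟩⟩
        · intro b hb
          rcases List.mem_cons.1 hb with rfl | hb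
          · exact le_of_lt (h1.trans (pnat_lt_succ m))
          · obtain ⟨f, hf, rfl⟩ := List.mem_map.1 hb
            exact le_of_lt ((h1.trans_le (h.1 f hf)).trans (pnat_lt_succ f))
        · intro b hb
          obtain ⟨f, hf, rfl⟩ := List.mem_map.1 hb
          exact pnat_succ_le_succ (h.1 f hf)

lemma emb_rmul {s : ℕ+} : ∀ {u : List ℕ+}, Srt u → emb u * lam s = emb (rmul s u) := by
  intro u
  induction u with
  | nil => simp [rmul_nil]
  | cons m t ih =>
      intro h
      replace h := List.pairwise_cons.1 h
      rcases le_or_gt m s with h1 | h1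
      · rw [rmul_cons_le h1, emb_cons, emb_cons, mul_assoc, ih h.2]
      · have hgt : ∀ e ∈ t, s < e := fun e he => h1.trans_le (h.1 e he)
        rw [rmul_cons_gt h1, emb_cons, mul_assoc, ih h.2, rmul_gt hgt,
          emb_cons, emb_cons, emb_cons, ← mul_assoc, lam_rel h1, mul_assoc]

lemma rmul_split {s : ℕ+} : ∀ {p q : List ℕ+}, (∀ e ∈ p, e ≤ s) → (∀ e ∈ q, s < e) →
    rmul s (p ++ q) = p ++ s :: q.map (· + 1) := by
  intro p
  induction p with
  | nil => intro q _ hq; rw [List.nil_append, rmul_gt hq]; rfl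
  | cons m p' ih =>
      intro q hp hq
      rw [List.cons_append, rmul_cons_le (hp m (List.mem_cons_self)),
        ih (fun e he => hp e (List.mem_cons_of_mem _ he)) hq, List.cons_append]

/-- CHR2 -/
lemma emb_split_mul_lam {p q : List ℕ+} {s : ℕ+} (hp : ∀ e ∈ p, e ≤ s)
    (hq : ∀ e ∈ q, s < e) (hs : Srt (p ++ q)) :
    emb (p ++ q) * lam s = emb (p ++ s :: q.map (· + 1)) := by
  rw [emb_rmul hs, rmul_split hp hq]

lemma sorted_split (s : ℕ+) : ∀ {u : List ℕ+}, Srt u →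
    ∃ p q, u = p ++ q ∧ (∀ e ∈ p, e ≤ s) ∧ (∀ e ∈ q, s < e) := by
  intro u
  induction u with
  | nil => intro _; exact ⟨[], [], rfl, by simp, by simp⟩
  | cons m t ih =>
      intro h
      replace h := List.pairwise_cons.1 h
      rcases le_or_gt m s with h1 | h1
      · obtain ⟨p, q, h2, h3, h4⟩ := ih h.2
        refine ⟨m :: p, q, by rw [h2, List.cons_append], ?_, h4⟩
        intro e he
        rcases List.mem_cons.1 he with rfl | he
        · exact h1
        · exact h3 e he
      · refine ⟨[], m :: t, rfl, by simp, ?_⟩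
        intro e he
        rcases List.mem_cons.1 he with rfl | he
        · exact h1
        · exact h1.trans_le (h.1 e he)

/-- CHR1 -/
lemma mul_lam_decomp (x : ForestMonoid) (s : ℕ+) :
    ∃ p q, nf x = p ++ q ∧ nf (x * lam s) = p ++ s :: q.map (· + 1) ∧
      (∀ e ∈ p, e ≤ s) ∧ (∀ e ∈ q, s < e) := by
  have hsrt := nf_sorted x
  have hx : x * lam s = emb (rmul s (nf x)) := by
    conv_lhs => rw [← emb_nf x]
    exact emb_rmul hsrt
  have hnf : nf (x * lam s) = rmul s (nf x) := by
    rw [hx, nf_emb_sorted (rmul_sorted hsrt)]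
  obtain ⟨p, q, hu, hp, hq⟩ := sorted_split s hsrt
  refine ⟨p, q, hu, ?_, hp, hq⟩
  rw [hnf, hu, rmul_split hp hq]
lemma splitu {s : ℕ+} : ∀ (p₁ : List ℕ+) {r₁ : List ℕ+} (p₂ : List ℕ+) {r₂ : List ℕ+},
    (∀ e ∈ p₁, e ≤ s) → (∀ e ∈ r₁, s < e) → (∀ e ∈ p₂, e ≤ s) → (∀ e ∈ r₂, s < e) →
    p₁ ++ s :: r₁ = p₂ ++ s :: r₂ → p₁ = p₂ ∧ r₁ = r₂ := by
  intro p₁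
  induction p₁ with
  | nil =>
      intro r₁ p₂ r₂ _ hr1 hp2 _ h
      cases p₂ with
      | nil => simpa using h
      | cons b p₂' =>
          rw [List.nil_append, List.cons_append] at h
          obtain ⟨rfl, h2⟩ := List.cons_eq_cons.1 h
          exfalso
          have : s ∈ r₁ := by
            rw [h2]
            exact List.mem_append.2 (Or.inr (List.mem_cons_self))
          exact lt_irrefl s (hr1 s this)
  | cons a p₁' ih =>
      intro r₁ p₂ r₂ hp1 hr1 hp2 hr2 h
      cases p₂ with
      | nil =>
          rw [List.nil_append, List.cons_append] at h
          obtain ⟨rfl, h2⟩ := List.cons_eq_cons.1 h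
          exfalso
          have : a ∈ r₂ := by
            rw [← h2]
            exact List.mem_append.2 (Or.inr (List.mem_cons_self))
          exact lt_irrefl a (hr2 a this)
      | cons b p₂' =>
          rw [List.cons_append, List.cons_append] at h
          obtain ⟨rfl, h2⟩ := List.cons_eq_cons.1 h
          obtain ⟨h3, h4⟩ := ih p₂' (fun e he => hp1 e (List.mem_cons_of_mem _ he)) hr1
            (fun e he => hp2 e (List.mem_cons_of_mem _ he)) hr2 h2
          exact ⟨by rw [h3], h4⟩

lemma map_succ_gt {q : List ℕ+} {s : ℕ+} (h : ∀ e ∈ q, s < e) :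
    ∀ e ∈ q.map (· + 1), s < e := by
  intro e he
  obtain ⟨f, hf, rfl⟩ := List.mem_map.1 he
  exact (h f hf).trans (pnat_lt_succ f)

lemma right_cancel_lam {s : ℕ+} {x y : ForestMonoid} (h : x * lam s = y * lam s) : x = y := by
  obtain ⟨p₁, q₁, hx1, hx2, hp1, hq1⟩ := mul_lam_decomp x s
  obtain ⟨p₂, q₂, hy1, hy2, hp2, hq2⟩ := mul_lam_decomp y s
  have hv : p₁ ++ s :: q₁.map (· + 1) = p₂ ++ s :: q₂.map (· + 1) := by
    rw [← hx2, ← hy2, h]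
  obtain ⟨h3, h4⟩ := splitu p₁ p₂ hp1 (map_succ_gt hq1) hp2 (map_succ_gt hq2) hv
  have h5 : q₁ = q₂ := List.map_injective_iff.2 pnat_succ_inj h4
  apply nf_inj
  rw [hx1, hy1, h3, h5]

lemma pnat_exists_succ {e : ℕ+} (h : (1:ℕ+) < e) : ∃ e₀ : ℕ+, e = e₀ + 1 := by
  have h1 : 1 < (e : ℕ) := h
  refine ⟨⟨(e : ℕ) - 1, by omega⟩, ?_⟩
  apply PNat.coe_injective
  show (e : ℕ) = ((e : ℕ) - 1) + 1
  omega

lemma list_unshift : ∀ {q : List ℕ+}, (∀ e ∈ q, (1:ℕ+) < e) → ∃ q₀ : List ℕ+, q = q₀.map (· + 1) := by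
  intro q
  induction q with
  | nil => intro _; exact ⟨[], rfl⟩
  | cons m t ih =>
      intro h
      obtain ⟨t₀, ht⟩ := ih (fun e he => h e (List.mem_cons_of_mem _ he))
      obtain ⟨m₀, hm⟩ := pnat_exists_succ (h m (List.mem_cons_self))
      exact ⟨m₀ :: t₀, by rw [List.map_cons, ← hm, ← ht]⟩

lemma keyR {s t : ℕ+} {x y : ForestMonoid} (hst : s < t) (h : x * lam s = y * lam t) :
    ∃ z t₀, t = t₀ + 1 ∧ s < t₀ ∧ x = z * lam t₀ ∧ y = z * lam s := by
  obtain ⟨p₁, q₁, hx1, hx2, hp1, hq1⟩ := mul_lam_decomp x s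
  obtain ⟨p₂, q₂, hy1, hy2, hp2, hq2⟩ := mul_lam_decomp y t
  have hveq : p₁ ++ s :: q₁.map (· + 1) = p₂ ++ t :: q₂.map (· + 1) := by
    rw [← hx2, ← hy2, h]
  -- length comparison
  have hC2at : (p₂ ++ t :: q₂.map (· + 1))[p₂.length]? = some t := by
    rw [List.getElem?_append_right (Nat.le_refl _), Nat.sub_self]
    exact List.getElem?_cons_zero
  have hlen : p₁.length < p₂.length := by
    by_contra hle
    push_neg at hle
    have hmem : t ∈ p₁ ++ [s] := by
      have h1 : (p₁ ++ s :: q₁.map (· + 1))[p₂.length]? = some t := by rw [hveq]; exact hC2at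
      rcases Nat.lt_or_ge p₂.length p₁.length with hlt | hge
      · rw [List.getElem?_append_left hlt] at h1
        obtain ⟨hw, hval⟩ := List.getElem?_eq_some_iff.1 h1
        exact List.mem_append.2 (Or.inl (hval ▸ List.getElem_mem hw))
      · have hPeq : p₁.length = p₂.length := Nat.le_antisymm hge hle
        rw [List.getElem?_append_right (by omega : p₁.length ≤ p₂.length)] at h1
        have hz : p₂.length - p₁.length = 0 := by omega
        rw [hz, List.getElem?_cons_zero] at h1
        have : s = t := Option.some.inj h1
        exact absurd this (ne_of_lt hst)
    have : t ≤ s := by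
      rcases List.mem_append.1 hmem with h' | h'
      · exact hp1 t h'
      · simp at h'; subst h'; exact le_refl t
    exact absurd hst (not_lt.2 this)
  obtain ⟨r, hp2eq, hq1eq⟩ := surg p₁ p₂ hveq hlen
  -- decompose q₁
  obtain ⟨r₀, w, hq1split, hr, hw⟩ := List.map_eq_append_iff.1 hq1eq
  obtain ⟨t₀, q₂', hwsplit, ht₀, hq₂'⟩ := List.map_eq_cons_iff.1 hw
  have hq2eq : q₂' = q₂ := List.map_injective_iff.2 pnat_succ_inj hq₂'
  subst hq2eq
  -- facts
  have htt : t = t₀ + 1 := ht₀.symm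
  have hst₀ : s < t₀ := by
    have : t₀ ∈ q₁ := by
      rw [hq1split, hwsplit]
      exact List.mem_append.2 (Or.inr (List.mem_cons_self))
    exact hq1 t₀ this
  have h1t : (1:ℕ+) < t := by
    rw [htt]
    calc (1:ℕ+) ≤ t₀ := t₀.one_le
    _ < t₀ + 1 := pnat_lt_succ t₀
  obtain ⟨q₃, hq₃⟩ := list_unshift (fun e he => h1t.trans (hq2 e he))
  -- nf x and nf y shapes
  have hnfx : nf x = (p₁ ++ r₀) ++ t₀ :: q₃.map (· + 1) := by
    rw [hx1, hq1split, hwsplit, ← hq₃, List.append_assoc]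
  have hnfy : nf y = p₁ ++ s :: (r₀ ++ q₃).map (· + 1) := by
    rw [hy1, hp2eq, ← hr, hq₃, List.map_append]
    simp
  -- conditions
  have hr₀le : ∀ e ∈ r₀, e ≤ t₀ := by
    intro e he
    have : e + 1 ∈ p₂ := by
      rw [hp2eq, ← hr]
      exact List.mem_append.2 (Or.inr (List.mem_cons_of_mem _ (List.mem_map_of_mem he)))
    have h2 := hp2 _ this
    rw [htt] at h2
    have := (PNat.coe_le_coe _ _).2 h2
    rw [PNat.add_coe, PNat.add_coe] at this
    rw [← PNat.coe_le_coe]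
    omega
  have hr₀gt : ∀ e ∈ r₀, s < e := by
    intro e he
    refine hq1 e ?_
    rw [hq1split]
    exact List.mem_append.2 (Or.inl he)
  have hq₃gt : ∀ e ∈ q₃, t₀ < e := by
    intro e he
    have : e + 1 ∈ q₂' := by rw [hq₃]; exact List.mem_map_of_mem he
    have h2 := hq2 _ this
    rw [htt] at h2
    have := (PNat.coe_lt_coe _ _).2 h2
    rw [PNat.add_coe, PNat.add_coe] at this
    rw [← PNat.coe_lt_coe]
    omega
  -- sortedness of the core list
  have hsx' : Srt ((p₁ ++ r₀) ++ t₀ :: q₃.map (· + 1)) := hnfx ▸ nf_sorted x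
  have hPle : ∀ e ∈ p₁ ++ r₀, e ≤ t₀ := by
    intro e he
    rcases List.mem_append.1 he with h' | h'
    · exact (hp1 e h').trans (le_of_lt hst₀)
    · exact hr₀le e h'
  have hsrt : Srt ((p₁ ++ r₀) ++ q₃) := by
    rw [Srt, List.pairwise_append]
    refine ⟨List.Pairwise.sublist (List.sublist_append_left _ _) hsx', ?_, ?_⟩
    · have hmapsrt : Srt (q₃.map (· + 1)) :=
        List.Pairwise.sublist ((List.sublist_cons_self t₀ _).trans
          (List.sublist_append_right _ _)) hsx'
      rw [Srt, List.pairwise_map] at hmapsrt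
      refine hmapsrt.imp ?_
      intro a b hab
      have := (PNat.coe_le_coe _ _).2 hab
      rw [PNat.add_coe, PNat.add_coe] at this
      rw [← PNat.coe_le_coe]
      omega
    · intro a ha b hb
      exact (hPle a ha).trans (le_of_lt (hq₃gt b hb))
  have hx' : x = emb ((p₁ ++ r₀) ++ q₃) * lam t₀ := by
    have hh := emb_split_mul_lam hPle hq₃gt hsrt
    rw [← emb_nf x, hnfx, ← hh]
  have hy' : y = emb (p₁ ++ (r₀ ++ q₃)) * lam s := by
    have hq' : ∀ e ∈ r₀ ++ q₃, s < e := by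
      intro e he
      rcases List.mem_append.1 he with h' | h'
      · exact hr₀gt e h'
      · exact hst₀.trans (hq₃gt e h')
    have hsrt2 : Srt (p₁ ++ (r₀ ++ q₃)) := by
      rw [← List.append_assoc]
      exact hsrt
    have hh := emb_split_mul_lam hp1 hq' hsrt2
    rw [← emb_nf y, hnfy, ← hh]
  refine ⟨emb ((p₁ ++ r₀) ++ q₃), t₀, htt, hst₀, hx', ?_⟩
  rw [hy', List.append_assoc]
/-- length -/
def len (x : ForestMonoid) : ℕ := (nf x).length

lemma Phi_emb_len : ∀ (l L : List ℕ+), (Phi (emb l) L).length = l.length + L.length := by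
  intro l
  induction l with
  | nil => intro L; rw [emb_nil, map_one]; simp; rfl
  | cons k t ih =>
      intro L
      rw [emb_cons, map_mul]
      show (Phi (lam k) (Phi (emb t) L)).length = _
      rw [Phi_lam, lm_length, ih]
      simp
      omega

lemma len_emb (l : List ℕ+) : len (emb l) = l.length := by
  show (Phi (emb l) []).length = _
  rw [Phi_emb_len]
  rfl

lemma len_mul (x y : ForestMonoid) : len (x * y) = len x + len y := by
  obtain ⟨l, rfl⟩ := exists_emb x
  show (Phi (emb l * y) []).length = _
  rw [map_mul]
  show (Phi (emb l) (Phi y [])).length = _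
  rw [Phi_emb_len, len_emb]
  rfl

lemma len_one : len (1 : ForestMonoid) = 0 := by
  rw [← emb_nil, len_emb]
  rfl

lemma len_lam (k : ℕ+) : len (lam k) = 1 := by
  have : lam k = emb [k] := by simp
  rw [this, len_emb]
  rfl

lemma eq_one_of_len_zero {x : ForestMonoid} (h : len x = 0) : x = 1 := by
  have : nf x = [] := List.length_eq_zero_iff.1 h
  rw [← emb_nf x, this, emb_nil]

lemma exists_first {x : ForestMonoid} (h : x ≠ 1) : ∃ s x₁, x = lam s * x₁ := by
  obtain ⟨l, rfl⟩ := exists_emb x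
  cases l with
  | nil => exact absurd rfl h
  | cons s t => exact ⟨s, emb t, by rw [emb_cons]⟩

lemma exists_last {x : ForestMonoid} (h : x ≠ 1) : ∃ x₁ s, x = x₁ * lam s := by
  obtain ⟨l, rfl⟩ := exists_emb x
  rcases l.eq_nil_or_concat with rfl | ⟨l', a, rfl⟩
  · exact absurd rfl h
  · exact ⟨emb l', a, by rw [List.concat_eq_append, emb_append, emb_cons, emb_nil, mul_one]⟩

/-- least common right multiple of a generator and an element -/
lemma RC1 : ∀ (l : List ℕ+) (x : ℕ+), ∃ c : ForestMonoid,
    (∃ u, lam x * u = c) ∧ (∃ v, emb l * v = c) ∧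
    ∀ c', (∃ u, lam x * u = c') → (∃ v, emb l * v = c') → ∃ w, c * w = c' := by
  intro l
  induction l with
  | nil =>
      intro x
      refine ⟨lam x, ⟨1, mul_one _⟩, ⟨lam x, by rw [emb_nil, one_mul]⟩, ?_⟩
      intro c' hu _
      exact hu
  | cons y l₁ ih =>
      intro x
      rcases lt_trichotomy x y with hxy | rfl | hyx
      · -- x < y
        obtain ⟨c₂, ⟨u₂, hu₂⟩, ⟨v₂, hv₂⟩, least₂⟩ := ih x
        refine ⟨lam y * c₂, ⟨lam (y+1) * u₂, ?_⟩, ⟨v₂, ?_⟩, ?_⟩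
        · rw [← hu₂, ← mul_assoc, ← lam_rel hxy, mul_assoc]
        · rw [emb_cons, mul_assoc, hv₂]
        · rintro c' ⟨u', hu'⟩ ⟨v', hv'⟩
          rw [emb_cons, mul_assoc] at hv'
          have heq : lam x * u' = lam y * (emb l₁ * v') := by rw [hu', hv']
          obtain ⟨z, hz1, hz2⟩ := keyL hxy heq
          obtain ⟨w, hw⟩ := least₂ (lam x * z) ⟨z, rfl⟩ ⟨v', hz2⟩
          refine ⟨w, ?_⟩
          rw [mul_assoc, hw, ← hu', hz1, ← mul_assoc, lam_rel hxy, mul_assoc]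
      · -- x = y
        refine ⟨emb (x :: l₁), ⟨emb l₁, by rw [emb_cons]⟩, ⟨1, mul_one _⟩, ?_⟩
        rintro c' _ ⟨v', hv'⟩
        exact ⟨v', hv'⟩
      · -- y < x
        obtain ⟨c₂, ⟨u₂, hu₂⟩, ⟨v₂, hv₂⟩, least₂⟩ := ih (x+1)
        refine ⟨lam y * c₂, ⟨lam y * u₂, ?_⟩, ⟨v₂, ?_⟩, ?_⟩
        · rw [← hu₂, ← mul_assoc, ← mul_assoc, ← lam_rel hyx]
        · rw [emb_cons, mul_assoc, hv₂]
        · rintro c' ⟨u', hu'⟩ ⟨v', hv'⟩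
          rw [emb_cons, mul_assoc] at hv'
          have heq : lam y * (emb l₁ * v') = lam x * u' := by rw [hu', hv']
          obtain ⟨z, hz1, hz2⟩ := keyL hyx heq
          obtain ⟨w, hw⟩ := least₂ (lam (x+1) * z) ⟨z, rfl⟩ ⟨v', hz1⟩
          refine ⟨w, ?_⟩
          rw [mul_assoc, hw, ← hu', hz2, ← mul_assoc, ← mul_assoc, ← lam_rel hyx]
      
/-- least common right multiples exist -/
lemma rlcm : ∀ (n : ℕ) (a : ForestMonoid), len a ≤ n → ∀ b, ∃ c,
    (∃ u, a * u = c) ∧ (∃ v, b * v = c) ∧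
    ∀ c', (∃ u, a * u = c') → (∃ v, b * v = c') → ∃ w, c * w = c' := by
  intro n
  induction n with
  | zero =>
      intro a ha b
      have : a = 1 := eq_one_of_len_zero (Nat.le_zero.1 ha)
      subst this
      refine ⟨b, ⟨b, one_mul _⟩, ⟨1, mul_one _⟩, ?_⟩
      rintro c' _ ⟨v, hv⟩
      exact ⟨v, hv⟩
  | succ n ih =>
      intro a ha b
      by_cases h1 : a = 1
      · subst h1
        refine ⟨b, ⟨b, one_mul _⟩, ⟨1, mul_one _⟩, ?_⟩
        rintro c' _ ⟨v, hv⟩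
        exact ⟨v, hv⟩
      · obtain ⟨s, a₁, rfl⟩ := exists_first h1
        have hlen : len a₁ ≤ n := by
          have := len_mul (lam s) a₁
          rw [len_lam] at this
          omega
        obtain ⟨c₁, ⟨u₁, hu₁⟩, ⟨v₁, hv₁⟩, least₁⟩ := by
          have := RC1 (nf b) s
          rwa [emb_nf b] at this
        obtain ⟨c₂, ⟨α, hα⟩, ⟨β, hβ⟩, least₂⟩ := ih a₁ hlen u₁
        refine ⟨lam s * c₂, ⟨α, by rw [mul_assoc, hα]⟩, ⟨v₁ * β, ?_⟩, ?_⟩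
        · rw [← hβ, ← mul_assoc (lam s) u₁ β, hu₁, ← hv₁, mul_assoc]
        · rintro c' ⟨u', hu'⟩ ⟨v', hv'⟩
          obtain ⟨w, hw⟩ := least₁ c' ⟨a₁ * u', by rw [← hu', mul_assoc]⟩ ⟨v', hv'⟩
          have : lam s * (a₁ * u') = lam s * (u₁ * w) := by
            rw [← mul_assoc, ← mul_assoc, hu₁, hu', hw]
          have hcanc : a₁ * u' = u₁ * w := left_cancel_lam this
          obtain ⟨γ, hγ⟩ := least₂ (a₁ * u') ⟨u', rfl⟩ ⟨w, hcanc.symm⟩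
          refine ⟨γ, ?_⟩
          rw [mul_assoc, hγ, ← mul_assoc, hu']
/-- least common left multiple of an element and a generator (conditional) -/
lemma LC1 : ∀ (l : List ℕ+) (x : ℕ+),
    (∃ z v : ForestMonoid, z * lam x = v * emb l) →
    ∃ z₁ : ForestMonoid, (∃ v₁, z₁ * lam x = v₁ * emb l) ∧
      ∀ z', (∃ v', z' * lam x = v' * emb l) → ∃ u, z' = u * z₁ := by
  intro l
  induction l using List.reverseRecOn with
  | nil =>
      intro x _
      refine ⟨1, ⟨lam x, by rw [one_mul, emb_nil, mul_one]⟩, ?_⟩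
      intro z' _
      exact ⟨z', (mul_one z').symm⟩
  | append_singleton l₁ y ih =>
      intro x hyp
      rcases lt_trichotomy x y with hxy | rfl | hyx
      · -- x < y
        obtain ⟨z₀, v₀, h₀⟩ := hyp
        rw [emb_append, emb_cons, emb_nil, mul_one, ← mul_assoc] at h₀
        obtain ⟨ζ, y₀, hy, hxy₀, hz₀, hζ⟩ := keyR hxy h₀
        obtain ⟨ζ₁, ⟨v₁, hv₁⟩, least'⟩ := ih x ⟨ζ, v₀, hζ.symm⟩
        refine ⟨ζ₁ * lam y₀, ⟨v₁, ?_⟩, ?_⟩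
        · rw [emb_append, emb_cons, emb_nil, mul_one, mul_assoc, lam_rel hxy₀, ← mul_assoc,
            hv₁, hy, mul_assoc]
        · rintro z' ⟨v', hv'⟩
          rw [emb_append, emb_cons, emb_nil, mul_one, ← mul_assoc] at hv'
          obtain ⟨ζ', y₀', hy', hxy₀', hz', hζ'⟩ := keyR hxy hv'
          have hyy : y₀' = y₀ := pnat_succ_inj (show y₀' + 1 = y₀ + 1 by rw [← hy', ← hy])
          subst hyy
          obtain ⟨u, hu⟩ := least' ζ' ⟨v', hζ'.symm⟩
          exact ⟨u, by rw [hz', hu, mul_assoc]⟩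
      · -- x = y
        refine ⟨emb l₁, ⟨1, by rw [emb_append, emb_cons, emb_nil, mul_one, one_mul]⟩, ?_⟩
        rintro z' ⟨v', hv'⟩
        rw [emb_append, emb_cons, emb_nil, mul_one, ← mul_assoc] at hv'
        exact ⟨v', right_cancel_lam hv'⟩
      · -- y < x
        obtain ⟨z₀, v₀, h₀⟩ := hyp
        rw [emb_append, emb_cons, emb_nil, mul_one, ← mul_assoc] at h₀
        obtain ⟨ζ, x₀, hx, hyx₀, hζ, hz₀⟩ := keyR hyx h₀.symm
        obtain ⟨ζ₁, ⟨v₁, hv₁⟩, least'⟩ := ih x₀ ⟨ζ, v₀, hζ.symm⟩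
        refine ⟨ζ₁ * lam y, ⟨v₁, ?_⟩, ?_⟩
        · rw [emb_append, emb_cons, emb_nil, mul_one, hx, mul_assoc, ← lam_rel hyx₀,
            ← mul_assoc, hv₁, mul_assoc]
        · rintro z' ⟨v', hv'⟩
          rw [emb_append, emb_cons, emb_nil, mul_one, ← mul_assoc] at hv'
          obtain ⟨ζ', x₀', hx', hyx₀', hζ', hz'⟩ := keyR hyx hv'.symm
          have hxx : x₀' = x₀ := pnat_succ_inj (show x₀' + 1 = x₀ + 1 by rw [← hx', ← hx])
          subst hxx
          obtain ⟨u, hu⟩ := least' ζ' ⟨v', hζ'.symm⟩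
          exact ⟨u, by rw [hz', hu, mul_assoc]⟩

/-- conditional least common left multiples -/
lemma llcm : ∀ (n : ℕ) (a : ForestMonoid), len a ≤ n → ∀ b : ForestMonoid,
    (∃ c₀ x₀ y₀ : ForestMonoid, x₀ * a = c₀ ∧ y₀ * b = c₀) →
    ∃ c, (∃ x, x * a = c) ∧ (∃ y, y * b = c) ∧
      ∀ c', (∃ x', x' * a = c') → (∃ y', y' * b = c') → ∃ w, w * c = c' := by
  intro n
  induction n with
  | zero =>
      intro a ha b _
      have : a = 1 := eq_one_of_len_zero (Nat.le_zero.1 ha)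
      subst this
      refine ⟨b, ⟨b, mul_one _⟩, ⟨1, one_mul _⟩, ?_⟩
      rintro c' _ ⟨y', hy'⟩
      exact ⟨y', hy'⟩
  | succ n ih =>
      intro a ha b hyp
      by_cases h1 : a = 1
      · subst h1
        refine ⟨b, ⟨b, mul_one _⟩, ⟨1, one_mul _⟩, ?_⟩
        rintro c' _ ⟨y', hy'⟩
        exact ⟨y', hy'⟩
      · obtain ⟨a₁, s, rfl⟩ := exists_last h1
        have hlen : len a₁ ≤ n := by
          have := len_mul a₁ (lam s)
          rw [len_lam] at this
          omega
        obtain ⟨c₀, x₀, y₀, hx₀, hy₀⟩ := hyp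
        have hsolv : ∃ z v : ForestMonoid, z * lam s = v * b :=
          ⟨x₀ * a₁, y₀, by rw [mul_assoc, hx₀, hy₀]⟩
        obtain ⟨z₁, ⟨v₁, hv₁⟩, least₁⟩ := by
          have h2 := LC1 (nf b) s
          rw [emb_nf b] at h2
          exact h2 hsolv
        obtain ⟨u, hu⟩ := least₁ (x₀ * a₁) ⟨y₀, by rw [mul_assoc, hx₀, hy₀]⟩
        obtain ⟨m, ⟨α, hα⟩, ⟨β, hβ⟩, least₂⟩ := ih a₁ hlen z₁ ⟨x₀ * a₁, x₀, u, rfl, hu.symm⟩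
        refine ⟨m * lam s, ⟨α, by rw [← hα, mul_assoc]⟩, ⟨β * v₁, ?_⟩, ?_⟩
        · rw [← hβ, mul_assoc, mul_assoc, ← hv₁]
        · rintro c' ⟨x', hx'⟩ ⟨y', hy'⟩
          obtain ⟨u', hu'⟩ := least₁ (x' * a₁) ⟨y', by rw [mul_assoc, hx', hy']⟩
          obtain ⟨γ, hγ⟩ := least₂ (x' * a₁) ⟨x', rfl⟩ ⟨u', hu'.symm⟩
          refine ⟨γ, ?_⟩
          rw [← mul_assoc, hγ, mul_assoc, hx']
/-- greatest common left factors -/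
lemma lgcd (a b : ForestMonoid) : ∃ d : ForestMonoid,
    ((∃ x, d * x = a) ∧ (∃ y, d * y = b)) ∧
    ∀ d' : ForestMonoid, (∃ x, d' * x = a) → (∃ y, d' * y = b) → ∃ z, d' * z = d := by
  set P : ℕ → Prop := fun nn => ∃ d : ForestMonoid,
    ((∃ x, d * x = a) ∧ (∃ y, d * y = b)) ∧ len d = nn with hP
  letI : DecidablePred P := Classical.decPred P
  have hP0 : P 0 := ⟨1, ⟨⟨a, one_mul a⟩, ⟨b, one_mul b⟩⟩, len_one⟩
  have hbound : ∀ d : ForestMonoid, (∃ x, d * x = a) → len d ≤ len a := by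
    rintro d ⟨x, hx⟩
    have := len_mul d x
    rw [hx] at this
    omega
  have hPN : P (Nat.findGreatest P (len a)) :=
    Nat.findGreatest_spec (Nat.zero_le _) hP0
  obtain ⟨d, ⟨⟨x, hx⟩, ⟨y, hy⟩⟩, hlenN⟩ := hPN
  refine ⟨d, ⟨⟨x, hx⟩, ⟨y, hy⟩⟩, ?_⟩
  rintro d' ⟨x', hx'⟩ ⟨y', hy'⟩
  obtain ⟨c, ⟨u, hu⟩, ⟨v, hv⟩, least⟩ := rlcm (len d) d (le_refl _) d'
  obtain ⟨w, hw⟩ := least a ⟨x, hx⟩ ⟨x', hx'⟩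
  obtain ⟨w2, hw2⟩ := least b ⟨y, hy⟩ ⟨y', hy'⟩
  have hcN : len c ≤ Nat.findGreatest P (len a) := by
    apply Nat.le_findGreatest
    · apply hbound
      exact ⟨w, hw⟩
    · exact ⟨c, ⟨⟨w, hw⟩, ⟨w2, hw2⟩⟩, rfl⟩
  have hlenc : len c = len d + len u := by rw [← hu, len_mul]
  have hu1 : u = 1 := eq_one_of_len_zero (by omega)
  rw [hu1, mul_one] at hu
  exact ⟨v, by rw [hv, hu]⟩

/-- greatest common right factors -/
lemma rgcd (a b : ForestMonoid) : ∃ f : ForestMonoid,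
    ((∃ x, x * f = a) ∧ (∃ y, y * f = b)) ∧
    ∀ f' : ForestMonoid, (∃ x, x * f' = a) → (∃ y, y * f' = b) → ∃ z, z * f' = f := by
  set P : ℕ → Prop := fun nn => ∃ f : ForestMonoid,
    ((∃ x, x * f = a) ∧ (∃ y, y * f = b)) ∧ len f = nn with hP
  letI : DecidablePred P := Classical.decPred P
  have hP0 : P 0 := ⟨1, ⟨⟨a, mul_one a⟩, ⟨b, mul_one b⟩⟩, len_one⟩
  have hbound : ∀ f : ForestMonoid, (∃ x, x * f = a) → len f ≤ len a := by
    rintro f ⟨x, hx⟩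
    have := len_mul x f
    rw [hx] at this
    omega
  have hPN : P (Nat.findGreatest P (len a)) :=
    Nat.findGreatest_spec (Nat.zero_le _) hP0
  obtain ⟨f, ⟨⟨x, hx⟩, ⟨y, hy⟩⟩, hlenN⟩ := hPN
  refine ⟨f, ⟨⟨x, hx⟩, ⟨y, hy⟩⟩, ?_⟩
  rintro f' ⟨x', hx'⟩ ⟨y', hy'⟩
  obtain ⟨c, ⟨u, hu⟩, ⟨v, hv⟩, least⟩ :=
    llcm (len f) f (le_refl _) f' ⟨a, x, x', hx, hx'⟩
  obtain ⟨w, hw⟩ := least a ⟨x, hx⟩ ⟨x', hx'⟩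
  obtain ⟨w2, hw2⟩ := least b ⟨y, hy⟩ ⟨y', hy'⟩
  have hcN : len c ≤ Nat.findGreatest P (len a) := by
    apply Nat.le_findGreatest
    · have := len_mul w c
      rw [hw] at this
      omega
    · exact ⟨c, ⟨⟨w, hw⟩, ⟨w2, hw2⟩⟩, rfl⟩
  have hlenc : len c = len u + len f := by rw [← hu, len_mul]
  have hu1 : u = 1 := eq_one_of_len_zero (by omega)
  rw [hu1, one_mul] at hu
  exact ⟨v, by rw [hv, hu]⟩

end ForestAux

open ForestAux in
/-- the forest monoid has common right multiples, least common right
multiples, greatest common left factors, greatest common right factors, and conditional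
least common left multiples. -/
theorem forestMonoid_multiples_and_factors :
    (∀ a b : ForestMonoid, ∃ x y : ForestMonoid, a * x = b * y) ∧
    (∀ a b : ForestMonoid, ∃ c : ForestMonoid,
      ((∃ x, a * x = c) ∧ (∃ y, b * y = c)) ∧
      ∀ c' : ForestMonoid, (∃ x, a * x = c') → (∃ y, b * y = c') →
        ∃ z, c * z = c') ∧
    (∀ a b : ForestMonoid, ∃ d : ForestMonoid,
      ((∃ x, d * x = a) ∧ (∃ y, d * y = b)) ∧
      ∀ d' : ForestMonoid, (∃ x, d' * x = a) → (∃ y, d' * y = b) →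
        ∃ z, d' * z = d) ∧
    (∀ a b : ForestMonoid, ∃ f : ForestMonoid,
      ((∃ x, x * f = a) ∧ (∃ y, y * f = b)) ∧
      ∀ f' : ForestMonoid, (∃ x, x * f' = a) → (∃ y, y * f' = b) →
        ∃ z, z * f' = f) ∧
    (∀ a b : ForestMonoid, (∃ c' : ForestMonoid, (∃ x, x * a = c') ∧ (∃ y, y * b = c')) →
      ∃ c : ForestMonoid, ((∃ x, x * a = c) ∧ (∃ y, y * b = c)) ∧
        ∀ c' : ForestMonoid, (∃ x, x * a = c') → (∃ y, y * b = c') →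
          ∃ z, z * c = c') := by
  refine ⟨?_, ?_, ?_, ?_, ?_⟩
  · intro a b
    obtain ⟨c, ⟨x, hx⟩, ⟨y, hy⟩, _⟩ := rlcm (len a) a (le_refl _) b
    exact ⟨x, y, hx.trans hy.symm⟩
  · intro a b
    obtain ⟨c, h1, h2, h3⟩ := rlcm (len a) a (le_refl _) b
    exact ⟨c, ⟨h1, h2⟩, h3⟩
  · exact lgcd
  · exact rgcd
  · rintro a b ⟨c₀, ⟨x₀, hx₀⟩, ⟨y₀, hy₀⟩⟩
    obtain ⟨c, h1, h2, h3⟩ := llcm (len a) a (le_refl _) b ⟨c₀, x₀, y₀, hx₀, hy₀⟩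
    exact ⟨c, ⟨h1, h2⟩, h3⟩
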